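/- arXiv:1907.03158 — 2 statements merged into one kernel-verified Lean document; each statement's English description precedes it below -/
import Mathlib

section
/- For every tree T, the γ-graph T(γ) contains no odd cycle; equivalently, T(γ) is bipartite. -/
open SimpleGraph Finset

/-- The closed neighbourhood of a vertex. -/
def closedNbhd {V : Type} (G : SimpleGraph V) (x : V) : Set V :=
  {y | y = x ∨ G.Adj x y}

/-- `D` is a dominating set of `G`. -/
def isDomSet {V : Type} [Fintype V] [DecidableEq V] (G : SimpleGraph V) (D : Finset V) : Prop :=
  ∀ v : V, ∃ d ∈ D, v ∈ closedNbhd G d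

/-- `D` is a minimum dominating set (γ-set) of `G`. -/
def isMinDomSet {V : Type} [Fintype V] [DecidableEq V] (G : SimpleGraph V) (D : Finset V) : Prop :=
  isDomSet G D ∧ ∀ D' : Finset V, isDomSet G D' → D.card ≤ D'.card

/-- The set of `D`-private neighbours of `x`: vertices in `N[x]` not in the closed
neighbourhood of any other vertex of `D`. -/
def privN {V : Type} [Fintype V] [DecidableEq V] (G : SimpleGraph V) (D : Finset V) (x : V) :
    Set V :=
  {y | y ∈ closedNbhd G x ∧ ∀ z ∈ D, z ≠ x → y ∉ closedNbhd G z}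

/-- The γ-graph of `G`: vertices are the γ-sets of `G`, two γ-sets adjacent iff they differ
by a swap of two adjacent vertices. -/
def gammaGraph {V : Type} [Fintype V] [DecidableEq V] (G : SimpleGraph V) :
    SimpleGraph {D : Finset V // isMinDomSet G D} where
  Adj D₁ D₂ := D₁ ≠ D₂ ∧ ∃ u v : V, G.Adj u v ∧
    (D₂.1 = (D₁.1 \ {u}) ∪ {v} ∨ D₁.1 = (D₂.1 \ {u}) ∪ {v})
  symm := by
    refine ⟨?_⟩
    rintro D₁ D₂ ⟨hne, u, v, huv, h | h⟩
    · exact ⟨hne.symm, u, v, huv, Or.inr h⟩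
    · exact ⟨hne.symm, u, v, huv, Or.inl h⟩
  loopless := by refine ⟨?_⟩; rintro D ⟨hne, -⟩; exact hne rfl

/-- In a tree, adjacent vertices get distinct parities via path lengths to a root. -/
lemma tree_parity {V : Type} [DecidableEq V] (T : SimpleGraph V) (hT : T.IsTree) :
    ∃ f : V → ZMod 2, ∀ u v : V, T.Adj u v → f u ≠ f v := by
  obtain ⟨hne, hpath⟩ := SimpleGraph.isTree_iff_existsUnique_path.mp hT
  obtain ⟨r⟩ := hne
  choose p hp hun using fun v => hpath r v
  refine ⟨fun v => (p v).length, ?_⟩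
  have key : ∀ u v : V, T.Adj u v → ((p v).length : ZMod 2) = (p u).length + 1 ∨
      ((p u).length : ZMod 2) = (p v).length + 1 := by
    intro u v huv
    by_cases hv : v ∈ (p u).support
    · right
      have htake : ((p u).takeUntil v hv).IsPath := (hp u).takeUntil hv
      have hdrop : ((p u).dropUntil v hv).IsPath := (hp u).dropUntil hv
      have h1 : (p u).takeUntil v hv = p v := hun v _ htake
      have hsingle : (SimpleGraph.Walk.cons huv.symm SimpleGraph.Walk.nil : T.Walk v u).IsPath := by
        simp [SimpleGraph.Walk.cons_isPath_iff, huv.ne']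
      obtain ⟨q, hq, hqu⟩ := hpath v u
      have h2 : (p u).dropUntil v hv = SimpleGraph.Walk.cons huv.symm SimpleGraph.Walk.nil := by
        rw [hqu _ hdrop, hqu _ hsingle]
      have hlen := congr_arg SimpleGraph.Walk.length ((p u).take_spec hv)
      rw [SimpleGraph.Walk.length_append, h1, h2] at hlen
      simp only [SimpleGraph.Walk.length_cons, SimpleGraph.Walk.length_nil] at hlen
      rw [← hlen]
      push_cast
      ring
    · left
      have hconcat : ((p u).concat huv).IsPath := by
        rw [← SimpleGraph.Walk.isPath_reverse_iff, SimpleGraph.Walk.reverse_concat]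
        refine SimpleGraph.Walk.IsPath.cons ?_ ?_
        · rw [SimpleGraph.Walk.isPath_reverse_iff]; exact hp u
        · rwa [SimpleGraph.Walk.support_reverse, List.mem_reverse]
      have h1 : (p u).concat huv = p v := hun v _ hconcat
      rw [← h1, SimpleGraph.Walk.length_concat]
      push_cast
      ring
  intro u v huv h
  simp only at h
  rcases key u v huv with hk | hk <;> rw [h] at hk <;>
    exact one_ne_zero (left_eq_add.mp hk)
lemma swap_sum {V : Type} [Fintype V] [DecidableEq V] (T : SimpleGraph V) (f : V → ZMod 2)
    (hf : ∀ u v : V, T.Adj u v → f u ≠ f v) {D₁ D₂ : Finset V}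
    (h1 : isMinDomSet T D₁) (h2 : isMinDomSet T D₂) (hne : D₁ ≠ D₂) {u v : V}
    (huv : T.Adj u v) (heq : D₂ = (D₁ \ {u}) ∪ {v}) :
    ∑ d ∈ D₂, f d = (∑ d ∈ D₁, f d) + 1 := by
  have hcard : D₁.card = D₂.card := le_antisymm (h1.2 _ h2.1) (h2.2 _ h1.1)
  have hvu : v ≠ u := huv.ne'
  have heq' : D₂ = insert v (D₁.erase u) := by
    rw [heq, Finset.sdiff_singleton_eq_erase, Finset.union_comm, ← Finset.insert_eq]
  have hu : u ∈ D₁ := by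
    by_contra hu
    rw [Finset.erase_eq_of_notMem hu] at heq'
    by_cases hv : v ∈ D₁
    · exact hne (by rw [heq', Finset.insert_eq_self.mpr hv])
    · rw [heq', Finset.card_insert_of_notMem hv] at hcard
      omega
  have hv : v ∉ D₁ := by
    intro hv
    have hv' : v ∈ D₁.erase u := Finset.mem_erase.mpr ⟨hvu, hv⟩
    rw [heq', Finset.insert_eq_self.mpr hv', Finset.card_erase_of_mem hu] at hcard
    have : 1 ≤ D₁.card := Finset.card_pos.mpr ⟨u, hu⟩
    omega
  have hv' : v ∉ D₁.erase u := fun h => hv (Finset.mem_of_mem_erase h)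
  have hfv : f v = f u + 1 := by
    have hne' := hf u v huv
    revert hne'
    generalize f u = a; generalize f v = b
    revert a b; decide
  have hS : (∑ d ∈ D₁.erase u, f d) + f u = ∑ d ∈ D₁, f d :=
    Finset.sum_erase_add _ _ hu
  rw [heq', Finset.sum_insert hv']
  linear_combination hS + hfv

theorem stmt9 {V : Type} [Fintype V] [DecidableEq V] (T : SimpleGraph V) (hT : T.IsTree) :
    (gammaGraph T).Colorable 2 := by
  obtain ⟨f, hf⟩ := tree_parity T hT
  have C : (gammaGraph T).Coloring (ZMod 2) := by
    refine SimpleGraph.Coloring.mk (fun D => ∑ d ∈ D.1, f d) ?_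
    rintro D₁ D₂ ⟨hne, u, v, huv, hcase | hcase⟩ hsum
    · have := swap_sum T f hf D₁.2 D₂.2 (fun h => hne (Subtype.ext h)) huv hcase
      rw [hsum] at this
      exact one_ne_zero (add_eq_left.mp this.symm)
    · have := swap_sum T f hf D₂.2 D₁.2 (fun h => hne (Subtype.ext h.symm)) huv hcase
      rw [hsum] at this
      exact one_ne_zero (add_eq_left.mp this.symm)
  have h2 := C.colorable
  simpa [ZMod.card] using h2
end

section
/- For any tree T, the γ-graph T(γ) contains no subgraph isomorphic to the complete bipartite graph K_{2,3}. -/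
open SimpleGraph Finset

lemma no4 {V : Type} (T : SimpleGraph V) (hT : T.IsAcyclic) {p q r s : V}
    (hpq : p ≠ q) (hrs : r ≠ s) (h1 : T.Adj p r) (h2 : T.Adj r q)
    (h3 : T.Adj p s) (h4 : T.Adj s q) : False := by
  have heq := isAcyclic_iff_path_unique.mp hT
    (⟨Walk.cons h1 (Walk.cons h2 Walk.nil), by
      simp [Walk.isPath_def, h1.ne, h2.ne, hpq]⟩ : T.Path p q)
    (⟨Walk.cons h3 (Walk.cons h4 Walk.nil), by
      simp [Walk.isPath_def, h3.ne, h4.ne, hpq]⟩ : T.Path p q)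
  have hsupp := congrArg (fun P : T.Path p q => Walk.support P.1) heq
  simp only [Walk.support_cons, Walk.support_nil] at hsupp
  injection hsupp with _ h
  injection h with h _
  exact hrs h

lemma swap_struct {V : Type} [DecidableEq V] {S₁ S₂ : Finset V} {u v : V}
    (hne : S₁ ≠ S₂) (hcard : S₁.card = S₂.card) (h : S₂ = (S₁ \ {u}) ∪ {v}) :
    u ∈ S₁ ∧ u ∉ S₂ ∧ v ∈ S₂ ∧ v ∉ S₁ := by
  have h' : S₂ = insert v (S₁.erase u) := by
    rw [h, Finset.sdiff_singleton_eq_erase, Finset.union_comm, ← Finset.insert_eq]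
  by_cases hu : u ∈ S₁
  · by_cases hv : v ∈ S₁
    · exfalso
      by_cases huv : u = v
      · subst huv
        exact hne (h'.trans (Finset.insert_erase hu)).symm
      · have h2 : S₂ = S₁.erase u :=
          h'.trans (Finset.insert_eq_self.mpr (Finset.mem_erase.mpr ⟨Ne.symm huv, hv⟩))
        have h3 := Finset.card_erase_of_mem hu
        have h4 : 0 < S₁.card := Finset.card_pos.mpr ⟨u, hu⟩
        rw [← h2] at h3
        omega
    · have huv : u ≠ v := fun he => hv (he ▸ hu)
      refine ⟨hu, ?_, ?_, hv⟩
      · rw [h']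
        simp only [Finset.mem_insert, Finset.mem_erase]
        push_neg
        exact ⟨huv, fun hc => absurd rfl hc⟩
      · rw [h']; exact Finset.mem_insert_self v _
  · exfalso
    have he : S₁.erase u = S₁ := Finset.erase_eq_of_notMem hu
    rw [he] at h'
    by_cases hv : v ∈ S₁
    · exact hne (h'.trans (Finset.insert_eq_self.mpr hv)).symm
    · have hc := Finset.card_insert_of_notMem hv
      rw [← h'] at hc
      omega
lemma swap_symm {V : Type} [DecidableEq V] {S₁ S₂ : Finset V} {u v : V}
    (hu : u ∈ S₂) (hv : v ∉ S₂) (h : S₁ = (S₂ \ {u}) ∪ {v}) :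
    S₂ = (S₁ \ {v}) ∪ {u} := by
  have huv : u ≠ v := fun he => hv (he ▸ hu)
  subst h
  ext w
  simp only [Finset.mem_union, Finset.mem_sdiff, Finset.mem_singleton]
  by_cases hwu : w = u <;> by_cases hwv : w = v <;>
    simp_all

lemma adj_struct {V : Type} [Fintype V] [DecidableEq V] (G : SimpleGraph V)
    {D₁ D₂ : {D : Finset V // isMinDomSet G D}} (h : (gammaGraph G).Adj D₁ D₂) :
    ∃ u v : V, G.Adj u v ∧ u ∈ D₁.1 ∧ u ∉ D₂.1 ∧ v ∈ D₂.1 ∧ v ∉ D₁.1 ∧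
      D₂.1 = (D₁.1 \ {u}) ∪ {v} := by
  obtain ⟨hne, u, v, huv, hc | hc⟩ := h
  · have hne' : D₁.1 ≠ D₂.1 := fun he => hne (Subtype.ext he)
    have hcard : D₁.1.card = D₂.1.card :=
      le_antisymm (D₁.2.2 _ D₂.2.1) (D₂.2.2 _ D₁.2.1)
    obtain ⟨h1, h2, h3, h4⟩ := swap_struct hne' hcard hc
    exact ⟨u, v, huv, h1, h2, h3, h4, hc⟩
  · have hne' : D₂.1 ≠ D₁.1 := fun he => hne (Subtype.ext he.symm)
    have hcard : D₂.1.card = D₁.1.card :=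
      le_antisymm (D₂.2.2 _ D₁.2.1) (D₁.2.2 _ D₂.2.1)
    obtain ⟨h1, h2, h3, h4⟩ := swap_struct hne' hcard hc
    exact ⟨v, u, huv.symm, h3, h4, h1, h2, swap_symm h1 h4 hc⟩
theorem stmt18 {V : Type} [Fintype V] [DecidableEq V] (T : SimpleGraph V) (hT : T.IsTree) :
    ¬∃ f : completeBipartiteGraph (Fin 2) (Fin 3) →g gammaGraph T,
      Function.Injective f := by
  rintro ⟨f, hf⟩
  have hac : T.IsAcyclic := hT.2
  set A := f (Sum.inl 0) with hAdef
  set B := f (Sum.inl 1) with hBdef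
  have hAB : A ≠ B := fun h => absurd (hf h) (by decide)
  have hadjA : ∀ i : Fin 3, (gammaGraph T).Adj A (f (Sum.inr i)) :=
    fun i => f.map_adj (by simp)
  have hadjB : ∀ i : Fin 3, (gammaGraph T).Adj B (f (Sum.inr i)) :=
    fun i => f.map_adj (by simp)
  choose a a' hedga ha hnaC ha'C hna' hCa using fun i => adj_struct T (hadjA i)
  choose b b' hedgb hb hnbC hb'C hnb' hCb using fun i => adj_struct T (hadjB i)
  have memA : ∀ (i : Fin 3) (w : V),
      w ∈ (f (Sum.inr i)).1 ↔ (w ∈ A.1 ∧ w ≠ a i) ∨ w = a' i := by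
    intro i w
    rw [hCa i]
    simp [Finset.mem_union, Finset.mem_sdiff, Finset.mem_singleton]
    exact or_comm
  have memB : ∀ (i : Fin 3) (w : V),
      w ∈ (f (Sum.inr i)).1 ↔ (w ∈ B.1 ∧ w ≠ b i) ∨ w = b' i := by
    intro i w
    rw [hCb i]
    simp [Finset.mem_union, Finset.mem_sdiff, Finset.mem_singleton]
    exact or_comm
  have hCne : ∀ i j : Fin 3, (f (Sum.inr i)).1 = (f (Sum.inr j)).1 → i = j := by
    intro i j h
    have := hf (Subtype.ext h)
    simpa using this
  -- micro facts
  have fact1 : ∀ i, a i ∈ B.1 → a i = b i := by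
    intro i h
    have h1 := (memB i (a i)).mpr
    have h2 := hnaC i
    by_contra hne
    exact h2 (h1 (Or.inl ⟨h, hne⟩))
  have fact2 : ∀ i, a' i ∉ B.1 → a' i = b' i := by
    intro i h
    rcases (memB i (a' i)).mp (ha'C i) with ⟨h1, -⟩ | h1
    · exact absurd h1 h
    · exact h1
  have fact3 : ∀ i, b i ∈ A.1 → b i = a i := by
    intro i h
    have h1 := (memA i (b i)).mpr
    have h2 := hnbC i
    by_contra hne
    exact h2 (h1 (Or.inl ⟨h, hne⟩))
  have fact4 : ∀ i, b' i ∉ A.1 → b' i = a' i := by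
    intro i h
    rcases (memA i (b' i)).mp (hb'C i) with ⟨h1, -⟩ | h1
    · exact absurd h1 h
    · exact h1
  -- degenerate case impossible
  have nodegen : ∀ i, a i ∈ B.1 → a' i ∉ B.1 → False := by
    intro i hi1 hi2
    have e1 : a i = b i := fact1 i hi1
    have e2 : a' i = b' i := fact2 i hi2
    apply hAB
    apply Subtype.ext
    ext w
    constructor
    · intro hw
      by_cases hww : w = a i
      · rw [hww, e1]; exact hb i
      · by_cases hwa : w = a' i
        · exact absurd (hwa ▸ hw) (hna' i)
        · have hwC : w ∈ (f (Sum.inr i)).1 := (memA i w).mpr (Or.inl ⟨hw, hww⟩)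
          rcases (memB i w).mp hwC with ⟨h1, -⟩ | h1
          · exact h1
          · exact absurd (h1.trans e2.symm) hwa
    · intro hw
      by_cases hww : w = b i
      · rw [hww, ← e1]; exact ha i
      · have hwb' : w ≠ b' i := fun h => (hnb' i) (h ▸ hw)
        have hwC : w ∈ (f (Sum.inr i)).1 := (memB i w).mpr (Or.inl ⟨hw, hww⟩)
        rcases (memA i w).mp hwC with ⟨h1, -⟩ | h1
        · exact h1
        · exact absurd (h1.trans e2) hwb'
  -- type characterizations
  -- type 1 : a i ∉ B, a' i ∉ B
  have T1char : ∀ i, a i ∉ B.1 → a' i ∉ B.1 →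
      (∀ w, w ∈ A.1 → w ∉ B.1 → w = a i) ∧ (∀ w, w ∈ B.1 → w ∉ A.1 → w = b i) ∧
      b i ∉ A.1 ∧ a' i = b' i := by
    intro i h1 h2
    have e2 : a' i = b' i := fact2 i h2
    have hbA : b i ∉ A.1 := fun h => h1 ((fact3 i h) ▸ hb i)
    refine ⟨?_, ?_, hbA, e2⟩
    · intro w hwA hwB
      by_cases hwC : w ∈ (f (Sum.inr i)).1
      · rcases (memB i w).mp hwC with ⟨hw1, -⟩ | hw1
        · exact absurd hw1 hwB
        · exact absurd ((hw1.trans e2.symm) ▸ hwA) (hna' i)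
      · rcases not_or.mp ((memA i w).not.mp hwC) with ⟨hw1, -⟩
        by_contra hne
        exact hw1 ⟨hwA, hne⟩
    · intro w hwB hwA
      by_cases hwC : w ∈ (f (Sum.inr i)).1
      · rcases (memA i w).mp hwC with ⟨hw1, -⟩ | hw1
        · exact absurd hw1 hwA
        · exact absurd (hw1 ▸ hwB) h2
      · rcases not_or.mp ((memB i w).not.mp hwC) with ⟨hw1, -⟩
        by_contra hne
        exact hw1 ⟨hwB, hne⟩
  -- type 2 : a i ∈ B, a' i ∈ B
  have T2char : ∀ i, a i ∈ B.1 → a' i ∈ B.1 →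
      (∀ w, w ∈ A.1 → w ∉ B.1 → w = b' i) ∧ (∀ w, w ∈ B.1 → w ∉ A.1 → w = a' i) ∧
      a i = b i ∧ b' i ∈ A.1 := by
    intro i h1 h2
    have e1 : a i = b i := fact1 i h1
    have hb'A : b' i ∈ A.1 := by
      by_contra h
      exact (hnb' i) ((fact4 i h) ▸ h2)
    refine ⟨?_, ?_, e1, hb'A⟩
    · intro w hwA hwB
      by_cases hwC : w ∈ (f (Sum.inr i)).1
      · rcases (memB i w).mp hwC with ⟨hw1, -⟩ | hw1
        · exact absurd hw1 hwB
        · exact hw1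
      · rcases not_or.mp ((memA i w).not.mp hwC) with ⟨hw1, -⟩
        by_cases hne : w = a i
        · exact absurd (hne ▸ hwB) (fun hc => hc (e1 ▸ hb i))
        · exact absurd ⟨hwA, hne⟩ hw1
    · intro w hwB hwA
      by_cases hwC : w ∈ (f (Sum.inr i)).1
      · rcases (memA i w).mp hwC with ⟨hw1, -⟩ | hw1
        · exact absurd hw1 hwA
        · exact hw1
      · rcases not_or.mp ((memB i w).not.mp hwC) with ⟨hw1, -⟩
        by_cases hne : w = b i
        · exact absurd (hne ▸ hwA) (fun hc => hc (e1 ▸ ha i))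
        · exact absurd ⟨hwB, hne⟩ hw1
  -- type 3 : a i ∉ B, a' i ∈ B
  have T3char : ∀ i, a i ∉ B.1 → a' i ∈ B.1 →
      (∀ w, w ∈ A.1 → w ∉ B.1 → w = a i ∨ w = b' i) ∧
      (∀ w, w ∈ B.1 → w ∉ A.1 → w = a' i ∨ w = b i) ∧
      b' i ∈ A.1 ∧ b' i ∉ B.1 ∧ b i ∉ A.1 ∧
      a i ≠ b' i ∧ a' i ≠ b i := by
    intro i h1 h2
    have hb'A : b' i ∈ A.1 := by
      by_contra h
      exact (hnb' i) ((fact4 i h) ▸ h2)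
    have hbA : b i ∉ A.1 := fun h => h1 ((fact3 i h) ▸ hb i)
    have hne1 : a i ≠ b' i := fun h => (hnaC i) (h ▸ hb'C i)
    have hne2 : a' i ≠ b i := fun h => (hnbC i) (h ▸ ha'C i)
    refine ⟨?_, ?_, hb'A, hnb' i, hbA, hne1, hne2⟩
    · intro w hwA hwB
      by_cases hwC : w ∈ (f (Sum.inr i)).1
      · rcases (memB i w).mp hwC with ⟨hw1, -⟩ | hw1
        · exact absurd hw1 hwB
        · exact Or.inr hw1
      · rcases not_or.mp ((memA i w).not.mp hwC) with ⟨hw1, -⟩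
        by_contra hne
        push_neg at hne
        exact hw1 ⟨hwA, hne.1⟩
    · intro w hwB hwA
      by_cases hwC : w ∈ (f (Sum.inr i)).1
      · rcases (memA i w).mp hwC with ⟨hw1, -⟩ | hw1
        · exact absurd hw1 hwA
        · exact Or.inl hw1
      · rcases not_or.mp ((memB i w).not.mp hwC) with ⟨hw1, -⟩
        by_contra hne
        push_neg at hne
        exact hw1 ⟨hwB, hne.2⟩
  -- pair lemma: two of type 1
  have P11 : ∀ i j : Fin 3, i ≠ j → a i ∉ B.1 → a' i ∉ B.1 → a j ∉ B.1 → a' j ∉ B.1 →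
      False := by
    intro i j hij hi1 hi2 hj1 hj2
    obtain ⟨chAB, chBA, hbA, e2⟩ := T1char i hi1 hi2
    obtain ⟨-, -, hbAj, e2j⟩ := T1char j hj1 hj2
    have eaj : a j = a i := chAB (a j) (ha j) hj1
    have ebj : b j = b i := chBA (b j) (hb j) hbAj
    have hne : a' i ≠ a' j := by
      intro h
      apply hij
      apply hCne i j
      rw [hCa i, hCa j, eaj, h]
    exact no4 T hac (fun h : a i = b i => hi1 (by rw [h]; exact hb i)) hne (hedga i)
      ((e2 ▸ hedgb i).symm) (eaj ▸ hedga j) ((ebj ▸ e2j ▸ hedgb j).symm)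
  -- pair lemma: two of type 2
  have P22 : ∀ i j : Fin 3, i ≠ j → a i ∈ B.1 → a' i ∈ B.1 → a j ∈ B.1 → a' j ∈ B.1 →
      False := by
    intro i j hij hi1 hi2 hj1 hj2
    obtain ⟨chAB, chBA, e1, hb'A⟩ := T2char i hi1 hi2
    obtain ⟨-, -, e1j, hb'Aj⟩ := T2char j hj1 hj2
    have ea'j : a' j = a' i := chBA (a' j) hj2 (hna' j)
    have eb'j : b' j = b' i := chAB (b' j) hb'Aj (hnb' j)
    have hne : a i ≠ a j := by
      intro h
      apply hij
      apply hCne i j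
      rw [hCa i, hCa j, ea'j, h]
    refine no4 T hac (fun h : a' i = b' i => (hna' i) (by rw [h]; exact hb'A)) hne
      (hedga i).symm (e1 ▸ hedgb i) (ea'j ▸ hedga j).symm ?_
    have := hedgb j
    rw [e1j.symm, eb'j] at this
    exact this
  -- pair lemma: type 1 and type 2
  have P12 : ∀ i j : Fin 3, a i ∉ B.1 → a' i ∉ B.1 → a j ∈ B.1 → a' j ∈ B.1 → False := by
    intro i j hi1 hi2 hj1 hj2
    obtain ⟨chAB, chBA, hbA, e2⟩ := T1char i hi1 hi2
    obtain ⟨-, -, e1j, hb'Aj⟩ := T2char j hj1 hj2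
    have eb'j : b' j = a i := chAB (b' j) hb'Aj (hnb' j)
    have ea'j : a' j = b i := chBA (a' j) hj2 (hna' j)
    have hne : a' i ≠ a j := fun h => (hna' i) (h ▸ ha j)
    refine no4 T hac (fun h : a i = b i => hi1 (by rw [h]; exact hb i)) hne (hedga i)
      ((e2 ▸ hedgb i).symm) ?_ (ea'j ▸ hedga j)
    have := hedgb j
    rw [e1j.symm, eb'j] at this
    exact this.symm
  -- pair lemma: type 1 and type 3
  have P13 : ∀ i j : Fin 3, a i ∉ B.1 → a' i ∉ B.1 → a j ∉ B.1 → a' j ∈ B.1 → False := by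
    intro i j hi1 hi2 hj1 hj2
    obtain ⟨chAB, -, -, -⟩ := T1char i hi1 hi2
    obtain ⟨-, -, hb'A, hb'B, -, hne1, -⟩ := T3char j hj1 hj2
    exact hne1 ((chAB (a j) (ha j) hj1).trans (chAB (b' j) hb'A hb'B).symm)
  -- pair lemma: type 2 and type 3
  have P23 : ∀ i j : Fin 3, a i ∈ B.1 → a' i ∈ B.1 → a j ∉ B.1 → a' j ∈ B.1 → False := by
    intro i j hi1 hi2 hj1 hj2
    obtain ⟨chAB, -, -, -⟩ := T2char i hi1 hi2
    obtain ⟨-, -, hb'A, hb'B, -, hne1, -⟩ := T3char j hj1 hj2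
    exact hne1 ((chAB (a j) (ha j) hj1).trans (chAB (b' j) hb'A hb'B).symm)
  -- triple lemma helper for type 3
  have key : ∀ j : Fin 3, j ≠ 0 → a 0 ∉ B.1 → a' 0 ∈ B.1 → a j ∉ B.1 → a' j ∈ B.1 →
      a j = b' 0 ∧ a' j = b 0 := by
    intro j hj0 h01 h02 hj1 hj2
    obtain ⟨chAB, chBA, hb'A0, hb'B0, hbA0, hne10, hne20⟩ := T3char 0 h01 h02
    obtain ⟨-, -, hb'Aj, hb'Bj, hbAj, hne1j, hne2j⟩ := T3char j hj1 hj2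
    have haj := chAB (a j) (ha j) hj1
    have ha'j := chBA (a' j) hj2 (hna' j)
    have hb'j := chAB (b' j) hb'Aj hb'Bj
    have hbj := chBA (b j) (hb j) hbAj
    rcases haj with haj | haj
    · rcases ha'j with ha'j | ha'j
      · exfalso
        apply hj0
        apply hCne j 0
        rw [hCa j, hCa 0, haj, ha'j]
      · -- a j = a 0, a' j = b 0 : edges give 4-cycle
        exfalso
        have hb'j2 : b' j = b' 0 := by
          rcases hb'j with h | h
          · exact absurd (haj.trans h.symm) hne1j
          · exact h
        have hbj2 : b j = a' 0 := by
          rcases hbj with h | h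
          · exact h
          · exact absurd (ha'j.trans h.symm) (fun hc => hne2j hc)
        refine no4 T hac hne10 hne20 (hedga 0) ?_ ?_ (hedgb 0)
        · have := hedgb j
          rw [hbj2, hb'j2] at this
          exact this
        · have := hedga j
          rw [haj, ha'j] at this
          exact this
    · rcases ha'j with ha'j | ha'j
      · -- a j = b' 0, a' j = a' 0 : edges give 4-cycle
        exfalso
        have hb'j2 : b' j = a 0 := by
          rcases hb'j with h | h
          · exact h
          · exact absurd (haj.trans h.symm) hne1j
        have hbj2 : b j = b 0 := by
          rcases hbj with h | h
          · exact absurd (ha'j.trans h.symm) (fun hc => hne2j hc)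
          · exact h
        refine no4 T hac hne10 hne20 (hedga 0) ?_ ?_ (hedgb 0)
        · have := hedga j
          rw [haj, ha'j] at this
          exact this.symm
        · have := hedgb j
          rw [hbj2, hb'j2] at this
          exact this.symm
      · exact ⟨haj, ha'j⟩
  -- classification
  have classify : ∀ i : Fin 3, (a i ∉ B.1 ∧ a' i ∉ B.1) ∨ (a i ∈ B.1 ∧ a' i ∈ B.1) ∨
      (a i ∉ B.1 ∧ a' i ∈ B.1) := by
    intro i
    by_cases h1 : a i ∈ B.1 <;> by_cases h2 : a' i ∈ B.1
    · exact Or.inr (Or.inl ⟨h1, h2⟩)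
    · exact absurd (nodegen i h1 h2) id
    · exact Or.inr (Or.inr ⟨h1, h2⟩)
    · exact Or.inl ⟨h1, h2⟩
  -- endgame
  rcases classify 0 with ⟨t01, t02⟩ | ⟨t01, t02⟩ | ⟨t01, t02⟩
  · rcases classify 1 with ⟨t11, t12⟩ | ⟨t11, t12⟩ | ⟨t11, t12⟩
    · exact P11 0 1 (by decide) t01 t02 t11 t12
    · exact P12 0 1 t01 t02 t11 t12
    · exact P13 0 1 t01 t02 t11 t12
  · rcases classify 1 with ⟨t11, t12⟩ | ⟨t11, t12⟩ | ⟨t11, t12⟩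
    · exact P12 1 0 t11 t12 t01 t02
    · exact P22 0 1 (by decide) t01 t02 t11 t12
    · exact P23 0 1 t01 t02 t11 t12
  · rcases classify 1 with ⟨t11, t12⟩ | ⟨t11, t12⟩ | ⟨t11, t12⟩
    · exact P13 1 0 t11 t12 t01 t02
    · exact P23 1 0 t11 t12 t01 t02
    · rcases classify 2 with ⟨t21, t22⟩ | ⟨t21, t22⟩ | ⟨t21, t22⟩
      · exact P13 2 0 t21 t22 t01 t02
      · exact P23 2 0 t21 t22 t01 t02
      · obtain ⟨e1, e2⟩ := key 1 (by decide) t01 t02 t11 t12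
        obtain ⟨e3, e4⟩ := key 2 (by decide) t01 t02 t21 t22
        have : (1 : Fin 3) = 2 := by
          apply hCne
          rw [hCa 1, hCa 2, e1, e2, e3, e4]
        exact absurd this (by decide)
end
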